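/- (Invariant field.) Under the Assumption, suppose in addition that E is a tamely extended Derksen ideal. Then the invariant field L^G equals the field of fractions Quot(A) of the K-algebra A generated by the coefficients of the polynomials in the reduced Gröbner basis 𝒢 of E. -/

import Mathlib

open MvPolynomial
noncomputable section

namespace Derksen

variable {L : Type*} [Field L]

/-- Coefficient-wise action of a group element on a multivariate polynomial
(the variables are fixed). -/
def polyAct (G : Type*) [Group G] [MulSemiringAction G L] {n : ℕ} (σ : G)
    (f : MvPolynomial (Fin n) L) : MvPolynomial (Fin n) L :=
  MvPolynomial.map (MulSemiringAction.toRingHom G L σ) f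

/-- The Derksen ideal `D_{a_1,…,a_n} = ⋂_{σ ∈ G} (y_1 − σ·a_1, …, y_n − σ·a_n)`. -/
def derksenIdeal (G : Type*) [Group G] [MulSemiringAction G L] {n : ℕ}
    (a : Fin n → L) : Ideal (MvPolynomial (Fin n) L) :=
  ⨅ σ : G, Ideal.span (Set.range fun i => X i - C (σ • a i))

/-- The leading monomial of a multivariate polynomial with respect to a
monomial order (it is `0` for the zero polynomial). -/
def lm {n : ℕ} (m : MonomialOrder (Fin n)) {S : Type*} [CommSemiring S]
    (f : MvPolynomial (Fin n) S) : Fin n →₀ ℕ :=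
  m.toSyn.symm (f.support.sup fun d => m.toSyn d)

/-- The leading coefficient with respect to a monomial order. -/
def lc {n : ℕ} (m : MonomialOrder (Fin n)) {S : Type*} [CommSemiring S]
    (f : MvPolynomial (Fin n) S) : S :=
  f.coeff (lm m f)

/-- A (finite) Gröbner basis of an ideal of a polynomial ring over a field,
with respect to a monomial order: it consists of nonzero elements of the ideal,
generates it, and the leading monomial of every nonzero element of the ideal is
divisible by the leading monomial of some basis element. -/
structure IsGroebnerBasis {n : ℕ} (m : MonomialOrder (Fin n))
    (E : Ideal (MvPolynomial (Fin n) L)) (B : Finset (MvPolynomial (Fin n) L)) : Prop where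
  zero_not_mem : (0 : MvPolynomial (Fin n) L) ∉ B
  subset : (B : Set (MvPolynomial (Fin n) L)) ⊆ E
  span_eq : Ideal.span (B : Set (MvPolynomial (Fin n) L)) = E
  lm_dvd : ∀ f ∈ E, f ≠ 0 → ∃ g ∈ B, lm m g ≤ lm m f

/-- A reduced Gröbner basis: all elements are monic and no monomial occurring in
a basis element is divisible by the leading monomial of another basis element. -/
structure IsReducedGroebnerBasis {n : ℕ} (m : MonomialOrder (Fin n))
    (E : Ideal (MvPolynomial (Fin n) L)) (B : Finset (MvPolynomial (Fin n) L))
    extends IsGroebnerBasis m E B : Prop where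
  monic : ∀ g ∈ B, lc m g = 1
  reduced : ∀ g ∈ B, ∀ g' ∈ B, g' ≠ g → ∀ d ∈ g.support, ¬ lm m g' ≤ d

/-- The `K`-subalgebra of `L` (as a subring) generated by the coefficients of
the polynomials of `B`. -/
def coeffAlgebra (K : Subring L) {n : ℕ} (B : Finset (MvPolynomial (Fin n) L)) :
    Subring L :=
  Subring.closure (↑K ∪ {x : L | ∃ g ∈ B, ∃ d : Fin n →₀ ℕ, coeff d g = x})

end Derksen

namespace Derksen

/-- The ideal `I = {f(a_1,…,a_n) : f ∈ K[y_1,…,y_n] ∩ E}` of `R`, as a subset of `L`. -/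
def tameSet {L : Type*} [Field L] (K : Subring L) {n : ℕ} (a : Fin n → L)
    (E : Ideal (MvPolynomial (Fin n) L)) : Set L :=
  {x : L | ∃ f ∈ E, (∀ d : Fin n →₀ ℕ, coeff d f ∈ K) ∧ eval a f = x}

/-- `E` is a tamely extended Derksen ideal: `⋂_{σ ∈ G} σ·I` is nilpotent,
where `I = {f(a_1,…,a_n) : f ∈ K[y_1,…,y_n] ∩ E}`. -/
def IsTame {L : Type*} [Field L] (G : Type*) [Group G] [MulSemiringAction G L]
    (K : Subring L) {n : ℕ} (a : Fin n → L)
    (E : Ideal (MvPolynomial (Fin n) L)) : Prop :=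
  ∀ x : L, (∀ σ : G, ∃ y ∈ tameSet K a E, σ • y = x) → IsNilpotent x

section Aux

variable {L : Type*} [Field L] {n : ℕ}

lemma le_lm (m : MonomialOrder (Fin n)) {f : MvPolynomial (Fin n) L} {d : Fin n →₀ ℕ}
    (hd : d ∈ f.support) : m.toSyn d ≤ m.toSyn (lm m f) := by
  unfold lm
  rw [AddEquiv.apply_symm_apply]
  exact Finset.le_sup hd

lemma lm_mem_support (m : MonomialOrder (Fin n)) {f : MvPolynomial (Fin n) L} (hf : f ≠ 0) :
    lm m f ∈ f.support := by
  obtain ⟨d, hd, he⟩ := Finset.exists_mem_eq_sup f.support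
    (MvPolynomial.support_nonempty.mpr hf) (fun d => m.toSyn d)
  unfold lm
  rw [he, AddEquiv.symm_apply_apply]
  exact hd

lemma lt_lm_of_ne (m : MonomialOrder (Fin n)) {f : MvPolynomial (Fin n) L} {d : Fin n →₀ ℕ}
    (hd : d ∈ f.support) (hne : d ≠ lm m f) : m.toSyn d < m.toSyn (lm m f) :=
  lt_of_le_of_ne (le_lm m hd) (fun h => hne (m.toSyn.injective h))

lemma sub_C_eval_mem_span (c : Fin n → L) (f : MvPolynomial (Fin n) L) :
    f - C (eval c f) ∈ Ideal.span (Set.range fun i => X i - C (c i)) := by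
  induction f using MvPolynomial.induction_on with
  | C a => simp
  | add p q hp hq =>
      rw [map_add, map_add]
      have key : p + q - (C (eval c p) + C (eval c q))
          = (p - C (eval c p)) + (q - C (eval c q)) := by ring
      rw [key]
      exact Ideal.add_mem _ hp hq
  | mul_X p i hp =>
      have key : p * X i - C (eval c (p * X i))
          = p * (X i - C (c i)) + (p - C (eval c p)) * C (c i) := by
        rw [eval_mul, eval_X, map_mul]
        ring
      rw [key]
      exact Ideal.add_mem _ (Ideal.mul_mem_left _ _ (Ideal.subset_span ⟨i, rfl⟩))
        (Ideal.mul_mem_right _ _ hp)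

lemma mem_span_of_eval_eq_zero (c : Fin n → L) (f : MvPolynomial (Fin n) L)
    (hf : eval c f = 0) :
    f ∈ Ideal.span (Set.range fun i => X i - C (c i)) := by
  have := sub_C_eval_mem_span c f
  rwa [hf, map_zero, sub_zero] at this

variable {G : Type*} [Group G] [MulSemiringAction G L]

lemma coeff_polyAct (σ : G) (f : MvPolynomial (Fin n) L) (d : Fin n →₀ ℕ) :
    coeff d (polyAct G σ f) = σ • coeff d f :=
  coeff_map _ _ _

lemma support_polyAct (σ : G) (f : MvPolynomial (Fin n) L) :
    (polyAct G σ f).support = f.support :=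
  support_map_of_injective _ (MulSemiringAction.toRingHom G L σ).injective

lemma lm_polyAct (m : MonomialOrder (Fin n)) (σ : G) (f : MvPolynomial (Fin n) L) :
    lm m (polyAct G σ f) = lm m f := by
  unfold lm
  rw [support_polyAct]

lemma smul_eval (σ : G) (c : Fin n → L) (f : MvPolynomial (Fin n) L) :
    σ • eval c f = eval (fun i => σ • c i) (polyAct G σ f) := by
  unfold polyAct
  rw [eval_map, ← eval₂_id (g := c) f]
  show MulSemiringAction.toRingHom G L σ (eval₂ (RingHom.id L) c f) = _
  rw [eval₂_comp_left (MulSemiringAction.toRingHom G L σ)]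
  rfl

/-- The division algorithm / normal form with respect to a finite monic family. -/
lemma exists_normalForm (m : MonomialOrder (Fin n)) (B : Finset (MvPolynomial (Fin n) L))
    (hmonic : ∀ u ∈ B, lc m u = 1) (A' : Subring L)
    (hBA : ∀ u ∈ B, ∀ d, coeff d u ∈ A') :
    ∀ f : MvPolynomial (Fin n) L, (∀ d, coeff d f ∈ A') →
      ∃ r, f - r ∈ Ideal.span (B : Set (MvPolynomial (Fin n) L)) ∧
        (∀ d ∈ r.support, ∀ u ∈ B, ¬ lm m u ≤ d) ∧ (∀ d, coeff d r ∈ A') := by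
  suffices H : ∀ s : m.syn, ∀ f : MvPolynomial (Fin n) L, m.toSyn (lm m f) = s →
      (∀ d, coeff d f ∈ A') →
      ∃ r, f - r ∈ Ideal.span (B : Set (MvPolynomial (Fin n) L)) ∧
        (∀ d ∈ r.support, ∀ u ∈ B, ¬ lm m u ≤ d) ∧ (∀ d, coeff d r ∈ A') by
    exact fun f hf => H _ f rfl hf
  intro s
  induction s using WellFoundedLT.induction with
  | _ s IH =>
    intro f hs hf
    by_cases hf0 : f = 0
    · exact ⟨0, by simp [hf0], by simp, fun d => by rw [coeff_zero]; exact Subring.zero_mem _⟩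
    by_cases hred : ∃ u ∈ B, lm m u ≤ lm m f
    · obtain ⟨u, huB, hu⟩ := hred
      have hu0 : u ≠ 0 := by
        intro h
        have := hmonic u huB
        rw [h] at this
        simp [lc] at this
      set δ : Fin n →₀ ℕ := lm m f - lm m u with hδ
      have hδadd : δ + lm m u = lm m f := tsub_add_cancel_of_le hu
      set f' : MvPolynomial (Fin n) L := f - (monomial δ (lc m f)) * u with hf'
      have hcoeff' : ∀ d, coeff d f' = coeff d f -
          (if δ ≤ d then lc m f * coeff (d - δ) u else 0) := by
        intro d
        rw [hf', coeff_sub, coeff_monomial_mul']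
      -- the subtracted part lies in the span
      have hspan : f - f' ∈ Ideal.span (B : Set (MvPolynomial (Fin n) L)) := by
        rw [hf', sub_sub_cancel]
        exact Ideal.mul_mem_left _ _ (Ideal.subset_span huB)
      have hA' : ∀ d, coeff d f' ∈ A' := by
        intro d
        rw [hcoeff' d]
        refine Subring.sub_mem _ (hf d) ?_
        split
        · exact Subring.mul_mem _ (hf _) (hBA u huB _)
        · exact Subring.zero_mem _
      -- every monomial of f' is strictly smaller than lm m f
      have hlt : ∀ d ∈ f'.support, m.toSyn d < m.toSyn (lm m f) := by
        intro d hd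
        have hdne : coeff d f' ≠ 0 := MvPolynomial.mem_support_iff.mp hd
        have hdle : m.toSyn d ≤ m.toSyn (lm m f) := by
          by_contra hcon
          push_neg at hcon
          have h1 : coeff d f = 0 := by
            by_contra h1
            exact absurd (le_lm m (MvPolynomial.mem_support_iff.mpr h1)) (not_le.mpr hcon)
          apply hdne
          rw [hcoeff' d, h1, zero_sub, neg_eq_zero]
          split_ifs with hle
          · rcases eq_or_ne (coeff (d - δ) u) 0 with h2 | h2
            · rw [h2, mul_zero]
            · exfalso
              have hmem : (d - δ) ∈ u.support := MvPolynomial.mem_support_iff.mpr h2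
              have : m.toSyn (d - δ) ≤ m.toSyn (lm m u) := le_lm m hmem
              have hd' : d = δ + (d - δ) := (add_tsub_cancel_of_le hle).symm
              have : m.toSyn d ≤ m.toSyn (lm m f) := by
                rw [hd', map_add, ← hδadd, map_add]
                exact add_le_add_right this _
              exact absurd this (not_le.mpr hcon)
          · rfl
        refine lt_of_le_of_ne hdle ?_
        intro heq
        have hdeq : d = lm m f := m.toSyn.injective heq
        apply hdne
        rw [hcoeff' d, hdeq, if_pos (by rw [← hδadd]; exact le_self_add)]
        have : lm m f - δ = lm m u := by
          rw [← hδadd, add_tsub_cancel_left]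
        rw [this]
        have := hmonic u huB
        rw [lc] at this
        rw [this, mul_one, lc, sub_self]
      by_cases hf'0 : f' = 0
      · refine ⟨0, ?_, by simp, fun d => by rw [coeff_zero]; exact Subring.zero_mem _⟩
        rw [sub_zero, ← sub_zero f, ← hf'0]
        exact hspan
      · have : m.toSyn (lm m f') < s := by
          rw [← hs]
          exact hlt _ (lm_mem_support m hf'0)
        obtain ⟨r, hr1, hr2, hr3⟩ := IH _ this f' rfl hA'
        refine ⟨r, ?_, hr2, hr3⟩
        have : f - r = (f - f') + (f' - r) := by ring
        rw [this]
        exact Ideal.add_mem _ hspan hr1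
    · push_neg at hred
      set f' : MvPolynomial (Fin n) L := f - monomial (lm m f) (lc m f) with hf'
      have hcoeff' : ∀ d, coeff d f' = coeff d f -
          (if lm m f = d then lc m f else 0) := by
        intro d
        rw [hf', coeff_sub, coeff_monomial]
      have hA' : ∀ d, coeff d f' ∈ A' := by
        intro d
        rw [hcoeff' d]
        refine Subring.sub_mem _ (hf d) ?_
        split
        · exact hf _
        · exact Subring.zero_mem _
      have hsupp' : f'.support ⊆ f.support.erase (lm m f) := by
        intro d hd
        have hdne : coeff d f' ≠ 0 := MvPolynomial.mem_support_iff.mp hd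
        rw [hcoeff' d] at hdne
        rcases eq_or_ne (lm m f) d with h | h
        · exfalso
          apply hdne
          rw [if_pos h, ← h, lc, sub_self]
        · rw [if_neg h, sub_zero] at hdne
          exact Finset.mem_erase.mpr ⟨Ne.symm h, MvPolynomial.mem_support_iff.mpr hdne⟩
      by_cases hf'0 : f' = 0
      · refine ⟨f, by simp, ?_, hf⟩
        intro d hd u huB
        have hfd : f = monomial (lm m f) (lc m f) := by
          have := sub_eq_zero.mp hf'0
          exact this
        rw [hfd] at hd
        have : d = lm m f :=
          Finset.mem_singleton.mp (Finset.mem_of_subset support_monomial_subset hd)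
        rw [this]
        exact hred u huB
      · have hlt : m.toSyn (lm m f') < s := by
          rw [← hs]
          have hmem := lm_mem_support m hf'0
          have := hsupp' hmem
          exact lt_lm_of_ne m (Finset.mem_of_mem_erase this)
            (Finset.ne_of_mem_erase this)
        obtain ⟨r, hr1, hr2, hr3⟩ := IH _ hlt f' rfl hA'
        refine ⟨r + monomial (lm m f) (lc m f), ?_, ?_, ?_⟩
        · have : f - (r + monomial (lm m f) (lc m f)) = f' - r := by
            rw [hf']; ring
          rw [this]
          exact hr1
        · intro d hd u huB
          have := Finsupp.support_add hd
          rcases Finset.mem_union.mp this with h | h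
          · exact hr2 d h u huB
          · have : d = lm m f := Finset.mem_singleton.mp
              (Finset.mem_of_subset support_monomial_subset h)
            rw [this]
            exact hred u huB
        · intro d
          rw [coeff_add, coeff_monomial]
          refine Subring.add_mem _ (hr3 d) ?_
          split
          · exact hf _
          · exact Subring.zero_mem _

lemma nf_eq_zero (m : MonomialOrder (Fin n)) {E : Ideal (MvPolynomial (Fin n) L)}
    {B : Finset (MvPolynomial (Fin n) L)} (hB : IsGroebnerBasis m E B)
    {g : MvPolynomial (Fin n) L} (hgE : g ∈ E)
    (hnf : ∀ d ∈ g.support, ∀ u ∈ B, ¬ lm m u ≤ d) : g = 0 := by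
  by_contra hne
  obtain ⟨u, huB, hu⟩ := hB.lm_dvd g hgE hne
  exact hnf _ (lm_mem_support m hne) u huB hu

lemma exists_poly_of_mem_closure {K : Subring L} {a : Fin n → L} {x : L}
    (hx : x ∈ Subring.closure (↑K ∪ Set.range a)) :
    ∃ p : MvPolynomial (Fin n) L, (∀ d, coeff d p ∈ K) ∧ eval a p = x := by
  induction hx using Subring.closure_induction with
  | mem x hx =>
      rcases hx with hK | ⟨i, rfl⟩
      · refine ⟨C x, fun d => ?_, by simp⟩
        rw [coeff_C]
        split
        · exact hK
        · exact K.zero_mem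
      · refine ⟨X i, fun d => ?_, by simp⟩
        rw [coeff_X']
        split
        · exact K.one_mem
        · exact K.zero_mem
  | zero => exact ⟨0, fun d => by rw [coeff_zero]; exact K.zero_mem, by simp⟩
  | one =>
      refine ⟨1, fun d => ?_, by simp⟩
      rw [coeff_one]
      split
      · exact K.one_mem
      · exact K.zero_mem
  | add x y hx hy ihx ihy =>
      obtain ⟨p, hpK, hpe⟩ := ihx
      obtain ⟨q, hqK, hqe⟩ := ihy
      exact ⟨p + q, fun d => by rw [coeff_add]; exact K.add_mem (hpK d) (hqK d),
        by rw [map_add, hpe, hqe]⟩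
  | neg x hx ihx =>
      obtain ⟨p, hpK, hpe⟩ := ihx
      exact ⟨-p, fun d => by rw [coeff_neg]; exact K.neg_mem (hpK d),
        by rw [map_neg, hpe]⟩
  | mul x y hx hy ihx ihy =>
      obtain ⟨p, hpK, hpe⟩ := ihx
      obtain ⟨q, hqK, hqe⟩ := ihy
      refine ⟨p * q, fun d => ?_, by rw [map_mul, hpe, hqe]⟩
      classical
      rw [coeff_mul]
      exact K.sum_mem fun c _ => K.mul_mem (hpK c.1) (hqK c.2)

lemma polyAct_eq_self_of_mem (m : MonomialOrder (Fin n)) {E : Ideal (MvPolynomial (Fin n) L)}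
    {B : Finset (MvPolynomial (Fin n) L)} (hB : IsReducedGroebnerBasis m E B)
    (hEstable : ∀ (σ : G), ∀ f ∈ E, polyAct G σ f ∈ E)
    (σ : G) {g : MvPolynomial (Fin n) L} (hg : g ∈ B) : polyAct G σ g = g := by
  set g1 := polyAct G σ g with hg1
  have hgE : g ∈ E := hB.subset hg
  have hg1E : g1 ∈ E := hEstable σ g hgE
  have hsupp : g1.support = g.support := support_polyAct σ g
  have hg0 : g ≠ 0 := fun h => hB.zero_not_mem (h ▸ hg)
  have hcoefflm : coeff (lm m g) g1 = 1 := by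
    rw [hg1, coeff_polyAct]
    have : coeff (lm m g) g = 1 := hB.monic g hg
    rw [this, smul_one]
  have hcoeff0 : coeff (lm m g) (g - g1) = 0 := by
    rw [coeff_sub, hcoefflm]
    have : coeff (lm m g) g = 1 := hB.monic g hg
    rw [this, sub_self]
  have hzero : g - g1 = 0 := by
    by_contra hne
    have hhE : g - g1 ∈ E := E.sub_mem hgE hg1E
    obtain ⟨u, huB, hu⟩ := hB.lm_dvd (g - g1) hhE hne
    have hd : lm m (g - g1) ∈ (g - g1).support := lm_mem_support m hne
    have hdg : lm m (g - g1) ∈ g.support := by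
      have h1 := MvPolynomial.support_sub (Fin n) g g1 hd
      rw [hsupp, Finset.union_self] at h1
      exact h1
    have hdne : lm m (g - g1) ≠ lm m g := by
      intro he
      rw [he] at hd
      exact MvPolynomial.mem_support_iff.mp hd hcoeff0
    rcases eq_or_ne u g with hug | hug
    · have h1 : m.toSyn (lm m u) ≤ m.toSyn (lm m (g - g1)) := m.toSyn_monotone hu
      have h2 : m.toSyn (lm m (g - g1)) < m.toSyn (lm m g) := lt_lm_of_ne m hdg hdne
      rw [hug] at h1
      exact absurd h1 (not_le.mpr h2)
    · exact hB.reduced g hg u huB hug _ hdg hu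
  rw [← sub_eq_zero]
  show g1 - g = 0
  rw [← neg_sub, hzero, neg_zero]

end Aux

/-- **Invariant field.** Under the Assumption, if `E` is a tamely
extended Derksen ideal, then `L^G = Quot(A)`. -/
theorem statement1 {L G : Type*} [Field L] [Group G] [MulSemiringAction G L]
    {n : ℕ} (K : Subring L) (a : Fin n → L)
    (hK : ∀ (σ : G), ∀ x ∈ K, σ • x = x)
    (R : Subring L) (hR : R = Subring.closure (↑K ∪ Set.range a))
    (hRstable : ∀ (σ : G), ∀ x ∈ R, σ • x ∈ R)
    (hQuot : ∀ x : L, ∃ r ∈ R, ∃ s ∈ R, s ≠ 0 ∧ x = r / s)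
    (E : Ideal (MvPolynomial (Fin n) L))
    (hEproper : E ≠ ⊤)
    (hDE : derksenIdeal G a ≤ E)
    (hEstable : ∀ (σ : G), ∀ f ∈ E, polyAct G σ f ∈ E)
    (hTame : IsTame G K a E)
    (m : MonomialOrder (Fin n)) (B : Finset (MvPolynomial (Fin n) L))
    (hB : IsReducedGroebnerBasis m E B) :
    (FixedPoints.subfield G L : Set L) =
      {x : L | ∃ b ∈ coeffAlgebra K B, ∃ c ∈ coeffAlgebra K B, c ≠ 0 ∧ x = b / c} := by
  classical
  have hmem : ∀ y : L, y ∈ (FixedPoints.subfield G L : Set L) ↔ ∀ σ : G, σ • y = y := by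
    intro y
    rw [FixedPoints.subfield, Subfield.coe_copy]
    exact Iff.rfl
  have hKA' : ∀ x ∈ K, x ∈ coeffAlgebra K B := fun x hx =>
    Subring.subset_closure (Or.inl hx)
  have hBA' : ∀ u ∈ B, ∀ d, coeff d u ∈ coeffAlgebra K B := fun u hu d =>
    Subring.subset_closure (Or.inr ⟨u, hu, d, rfl⟩)
  have hfixA' : ∀ x ∈ coeffAlgebra K B, ∀ σ : G, σ • x = x := by
    intro x hx
    rw [coeffAlgebra] at hx
    induction hx using Subring.closure_induction with
    | mem y hy =>
        intro σ
        rcases hy with hyK | ⟨g, hgB, d, rfl⟩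
        · exact hK σ y hyK
        · rw [← coeff_polyAct σ g d, polyAct_eq_self_of_mem m hB hEstable σ hgB]
    | zero => exact fun σ => smul_zero σ
    | one => exact fun σ => smul_one σ
    | add u v _ _ hu hv => exact fun σ => by rw [smul_add, hu σ, hv σ]
    | neg u _ hu => exact fun σ => by rw [smul_neg, hu σ]
    | mul u v _ _ hu hv => exact fun σ => by rw [smul_mul', hu σ, hv σ]
  ext x
  simp only [Set.mem_setOf_eq]
  constructor
  · intro hxmem
    have hxfix : ∀ σ : G, σ • x = x := (hmem x).mp hxmem
    obtain ⟨r, hrR, s, hsR, hs0, hx⟩ := hQuot x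
    by_cases hcase : ∀ σ : G, ∀ q : MvPolynomial (Fin n) L,
        (∀ d, coeff d q ∈ K) → eval a q = σ • s → q ∈ E
    · exfalso
      apply hs0
      have hnil : IsNilpotent s := by
        apply hTame
        intro τ
        have hmem' : τ⁻¹ • s ∈ R := hRstable τ⁻¹ s hsR
        rw [hR] at hmem'
        obtain ⟨q, hqK, hqe⟩ := exists_poly_of_mem_closure hmem'
        exact ⟨τ⁻¹ • s, ⟨q, hcase τ⁻¹ q hqK hqe, hqK, hqe⟩, smul_inv_smul τ s⟩
      exact hnil.eq_zero
    · push_neg at hcase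
      obtain ⟨σ, q, hqK, hqe, hqE⟩ := hcase
      have hrmem : σ • r ∈ R := hRstable σ r hrR
      rw [hR] at hrmem
      obtain ⟨p, hpK, hpe⟩ := exists_poly_of_mem_closure hrmem
      set h : MvPolynomial (Fin n) L := p - C x * q with hh
      have hfixh : ∀ τ : G, ∀ d, τ • coeff d h = coeff d h := by
        intro τ d
        rw [hh, coeff_sub, coeff_C_mul, smul_sub, smul_mul',
          hK τ _ (hpK d), hK τ _ (hqK d), hxfix τ]
      have hpolyfix : ∀ τ : G, polyAct G τ h = h := by
        intro τ
        apply MvPolynomial.ext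
        intro d
        rw [coeff_polyAct, hfixh]
      have hrs : r = x * s := by
        rw [hx]
        field_simp
      have hevalh : eval a h = 0 := by
        rw [hh, map_sub, map_mul, eval_C, hpe, hqe]
        have : σ • r = x * (σ • s) := by rw [hrs, smul_mul', hxfix σ]
        rw [this, sub_self]
      have hhE : h ∈ E := by
        apply hDE
        rw [derksenIdeal]
        refine Ideal.mem_iInf.mpr fun τ => ?_
        apply mem_span_of_eval_eq_zero
        have := smul_eval τ a h
        rw [hpolyfix τ, hevalh, smul_zero] at this
        exact this.symm
      obtain ⟨Np, hNp1, hNp2, hNp3⟩ := exists_normalForm m B hB.monic (coeffAlgebra K B)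
        hBA' p (fun d => hKA' _ (hpK d))
      obtain ⟨Nq, hNq1, hNq2, hNq3⟩ := exists_normalForm m B hB.monic (coeffAlgebra K B)
        hBA' q (fun d => hKA' _ (hqK d))
      have hspanE : Ideal.span (B : Set (MvPolynomial (Fin n) L)) = E := hB.span_eq
      have hgE : Np - C x * Nq ∈ E := by
        have key : Np - C x * Nq = h - ((p - Np) - C x * (q - Nq)) := by
          rw [hh]
          ring
        rw [key]
        exact E.sub_mem hhE (E.sub_mem (hspanE ▸ hNp1)
          (Ideal.mul_mem_left _ _ (hspanE ▸ hNq1)))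
      have hgNF : ∀ d ∈ (Np - C x * Nq).support, ∀ u ∈ B, ¬ lm m u ≤ d := by
        intro d hd u huB hle
        have hdne := MvPolynomial.mem_support_iff.mp hd
        rw [coeff_sub, coeff_C_mul] at hdne
        rcases eq_or_ne (coeff d Np) 0 with h1 | h1
        · rcases eq_or_ne (coeff d Nq) 0 with h2 | h2
          · exact hdne (by rw [h1, h2, mul_zero, sub_zero])
          · exact hNq2 d (MvPolynomial.mem_support_iff.mpr h2) u huB hle
        · exact hNp2 d (MvPolynomial.mem_support_iff.mpr h1) u huB hle
      have hg0 : Np - C x * Nq = 0 := nf_eq_zero m hB.toIsGroebnerBasis hgE hgNF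
      have hNq0 : Nq ≠ 0 := by
        intro h0
        apply hqE
        have := hNq1
        rw [h0, sub_zero] at this
        exact hspanE ▸ this
      obtain ⟨d0, hd0⟩ := MvPolynomial.support_nonempty.mpr hNq0
      have hc0 : coeff d0 Nq ≠ 0 := MvPolynomial.mem_support_iff.mp hd0
      have heqc : coeff d0 Np = x * coeff d0 Nq := by
        have := congrArg (coeff d0) hg0
        rw [coeff_sub, coeff_C_mul, coeff_zero, sub_eq_zero] at this
        exact this
      exact ⟨coeff d0 Np, hNp3 d0, coeff d0 Nq, hNq3 d0, hc0,
        by rw [heqc, mul_div_assoc, div_self hc0, mul_one]⟩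
  · rintro ⟨b, hbA, c, hcA, hc0, rfl⟩
    rw [hmem]
    intro σ
    rw [div_eq_mul_inv, smul_mul', smul_inv'', hfixA' b hbA σ, hfixA' c hcA σ]

end Derksen
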